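/- arXiv:2605.13453 — 2 statements merged into one kernel-verified Lean document; each statement's English description precedes it below -/
import Mathlib

section
/- Let P be a symmetric positive definite n×n real matrix and ε > 0. Suppose A is an n×n real matrix satisfying P·A + Aᵀ·P ⪯ -ε·I (i.e., ε·I + P·A + Aᵀ·P is negative semidefinite). Then for every nonzero vector v, the function V(v) = vᵀ P v satisfies the decay estimate along the linear flow: for all t ≥ 0, (exp(tA)v)ᵀ P (exp(tA)v) ≤ exp(-(ε/λmax(P))·t) · vᵀ P v, where λmax(P) is the largest eigenvalue of P. -/
open Matrix

section Aux

attribute [local instance] Matrix.linftyOpNormedRing Matrix.linftyOpNormedAlgebra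

lemma specbound (n : ℕ) (P : Matrix (Fin n) (Fin n) ℝ) (hP : P.PosDef) :
    PosSemidef ((⨆ i, hP.1.eigenvalues i) • (1 : Matrix (Fin n) (Fin n) ℝ) - P) := by
  set lm := ⨆ i, hP.1.eigenvalues i with hlm
  set U := (hP.1.eigenvectorUnitary : Matrix (Fin n) (Fin n) ℝ) with hU
  have hUU : U * Uᴴ = 1 := by
    simpa [star_eq_conjTranspose] using (Matrix.mem_unitaryGroup_iff).mp hP.1.eigenvectorUnitary.2
  have hdiag : PosSemidef (diagonal (fun i => lm - hP.1.eigenvalues i)) := by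
    refine PosSemidef.diagonal fun i => ?_
    simp only [Pi.zero_apply]
    have : hP.1.eigenvalues i ≤ lm := le_ciSup (Set.Finite.bddAbove (Set.finite_range _)) i
    linarith
  have key := hdiag.mul_mul_conjTranspose_same U
  have : U * diagonal (fun i => lm - hP.1.eigenvalues i) * Uᴴ = lm • 1 - P := by
    have hd : (diagonal (fun i => lm - hP.1.eigenvalues i) : Matrix (Fin n) (Fin n) ℝ)
        = lm • 1 - diagonal (hP.1.eigenvalues) := by
      rw [← diagonal_sub]
      congr 1
      ext i j
      by_cases h : i = j <;> simp [Matrix.smul_apply, Matrix.one_apply, Matrix.diagonal_apply, h]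
    rw [hd, Matrix.mul_sub, Matrix.sub_mul, Matrix.mul_smul, mul_one, Matrix.smul_mul, hUU]
    congr 1
    conv_rhs => rw [hP.1.spectral_theorem]
    simp [star_eq_conjTranspose, Function.comp, hU]
  rwa [this] at key

lemma derivcomp (n : ℕ) (A : Matrix (Fin n) (Fin n) ℝ) (v : Fin n → ℝ) (t : ℝ) (i : Fin n) :
    HasDerivAt (fun u : ℝ => (NormedSpace.exp (u • A)).mulVec v i)
      ((A.mulVec ((NormedSpace.exp (t • A)).mulVec v)) i) t := by
  have he := hasDerivAt_exp_smul_const' A t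
  let L : Matrix (Fin n) (Fin n) ℝ →ₗ[ℝ] ℝ :=
    { toFun := fun M => M.mulVec v i
      map_add' := fun M N => by simp [Matrix.add_mulVec]
      map_smul' := fun c M => by simp [Matrix.smul_mulVec] }
  have h := (L.toContinuousLinearMap.hasFDerivAt.comp_hasDerivAt t he :)
  have : (A * NormedSpace.exp (t • A)).mulVec v i
      = (A.mulVec ((NormedSpace.exp (t • A)).mulVec v)) i := by
    rw [← Matrix.mulVec_mulVec]
  rw [← this]
  exact h

end Aux

/-- Exponential decay of the quadratic Lyapunov function `V(v) = vᵀ P v` along the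
linear flow `exp(tA)` under the Lyapunov inequality `P A + Aᵀ P ⪯ -ε I`. -/
theorem stmt0 (n : ℕ) (hn : 0 < n) (P A : Matrix (Fin n) (Fin n) ℝ)
    (hP : P.PosDef) (ε : ℝ) (hε : 0 < ε)
    (hlyap : (-(ε • (1 : Matrix (Fin n) (Fin n) ℝ) + (P * A + Aᵀ * P))).PosSemidef) :
    ∀ v : Fin n → ℝ, v ≠ 0 → ∀ t : ℝ, 0 ≤ t →
      ((NormedSpace.exp (t • A)).mulVec v) ⬝ᵥ P.mulVec ((NormedSpace.exp (t • A)).mulVec v)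
        ≤ Real.exp (-(ε / (⨆ i, hP.1.eigenvalues i)) * t) * (v ⬝ᵥ P.mulVec v) := by
  intro v hv t ht
  set lm := ⨆ i, hP.1.eigenvalues i with hlm
  have hlmpos : 0 < lm :=
    lt_of_lt_of_le (hP.eigenvalues_pos (⟨0, hn⟩ : Fin n))
      (le_ciSup (Set.Finite.bddAbove (Set.finite_range _)) (⟨0, hn⟩ : Fin n))
  set α := ε / lm with hα
  have hαpos : 0 < α := div_pos hε hlmpos
  have hαlm : α * lm = ε := div_mul_cancel₀ ε hlmpos.ne'
  -- spectral bound
  have hspec : ∀ x : Fin n → ℝ, x ⬝ᵥ P.mulVec x ≤ lm * (x ⬝ᵥ x) := by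
    intro x
    have h := (specbound n P hP).dotProduct_mulVec_nonneg x
    simp only [star_trivial, RCLike.re_to_real, Matrix.sub_mulVec,
      Matrix.smul_mulVec, Matrix.one_mulVec, dotProduct_sub, dotProduct_smul,
      smul_eq_mul, sub_nonneg] at h
    exact h
  -- Lyapunov bound
  have hlyapb : ∀ x : Fin n → ℝ, x ⬝ᵥ (P * A + Aᵀ * P).mulVec x ≤ -ε * (x ⬝ᵥ x) := by
    intro x
    have h := hlyap.dotProduct_mulVec_nonneg x
    simp only [star_trivial, RCLike.re_to_real] at h
    rw [Matrix.neg_mulVec, dotProduct_neg, Matrix.add_mulVec, dotProduct_add,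
      Matrix.smul_mulVec, Matrix.one_mulVec, dotProduct_smul, smul_eq_mul] at h
    linarith
  set x : ℝ → (Fin n → ℝ) := fun u => (NormedSpace.exp (u • A)).mulVec v with hxdef
  have hx : ∀ (s : ℝ) (i : Fin n), HasDerivAt (fun u => x u i) ((A.mulVec (x s)) i) s :=
    fun s i => derivcomp n A v s i
  set V : ℝ → ℝ := fun u => x u ⬝ᵥ P.mulVec (x u) with hVdef
  have hV : ∀ s, HasDerivAt V
      ((A.mulVec (x s)) ⬝ᵥ P.mulVec (x s) + x s ⬝ᵥ P.mulVec (A.mulVec (x s))) s := by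
    intro s
    have h1 : HasDerivAt (fun u => ∑ i, ∑ j, x u i * (P i j * x u j))
        (∑ i, ∑ j, ((A.mulVec (x s)) i * (P i j * x s j)
          + x s i * (P i j * (A.mulVec (x s)) j))) s :=
      HasDerivAt.fun_sum fun i _ => HasDerivAt.fun_sum fun j _ =>
        ((hx s i).mul ((hx s j).const_mul (P i j)))
    have h2 : V = fun u => ∑ i, ∑ j, x u i * (P i j * x u j) := by
      funext u
      simp [hVdef, Matrix.mulVec, dotProduct, Finset.mul_sum]
    rw [h2]
    convert h1 using 1
    simp [Matrix.mulVec, dotProduct, Finset.mul_sum, Finset.sum_add_distrib]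
  -- rewrite derivative
  have hDeq : ∀ y : Fin n → ℝ, (A.mulVec y) ⬝ᵥ P.mulVec y + y ⬝ᵥ P.mulVec (A.mulVec y)
      = y ⬝ᵥ (P * A + Aᵀ * P).mulVec y := by
    intro y
    rw [Matrix.add_mulVec, dotProduct_add, ← Matrix.mulVec_mulVec (M := Aᵀ),
      dotProduct_mulVec y Aᵀ, Matrix.vecMul_transpose, ← Matrix.mulVec_mulVec]
    ring
  set W : ℝ → ℝ := fun u => Real.exp (α * u) * V u with hWdef
  have hW : ∀ s, HasDerivAt W
      (α * Real.exp (α * s) * V s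
        + Real.exp (α * s) * (x s ⬝ᵥ (P * A + Aᵀ * P).mulVec (x s))) s := by
    intro s
    have := (((hasDerivAt_id s).const_mul α).exp.mul (hV s))
    rw [hDeq (x s)] at this
    refine this.congr_deriv ?_
    simp only [id_eq]
    ring
  have hanti : Antitone W := by
    refine antitone_of_deriv_nonpos (fun s => (hW s).differentiableAt) fun s => ?_
    rw [(hW s).deriv]
    have h1 := hlyapb (x s)
    have h2 := hspec (x s)
    have he := Real.exp_pos (α * s)
    have hVs : V s = x s ⬝ᵥ P.mulVec (x s) := rfl
    have key : α * (x s ⬝ᵥ P.mulVec (x s)) + (x s ⬝ᵥ (P * A + Aᵀ * P).mulVec (x s)) ≤ 0 := by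
      have h3 : α * (x s ⬝ᵥ P.mulVec (x s)) ≤ α * (lm * (x s ⬝ᵥ x s)) :=
        mul_le_mul_of_nonneg_left h2 hαpos.le
      rw [← mul_assoc, hαlm] at h3
      linarith
    have hre : α * Real.exp (α * s) * V s
        + Real.exp (α * s) * (x s ⬝ᵥ (P * A + Aᵀ * P).mulVec (x s))
        = Real.exp (α * s) * (α * (x s ⬝ᵥ P.mulVec (x s))
          + (x s ⬝ᵥ (P * A + Aᵀ * P).mulVec (x s))) := by
      rw [hVs]; ring
    rw [hre]
    exact mul_nonpos_of_nonneg_of_nonpos he.le key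
  have hW0 : W 0 = v ⬝ᵥ P.mulVec v := by
    simp [hWdef, hVdef, hxdef, NormedSpace.exp_zero]
  have ht' := hanti ht
  rw [hW0] at ht'
  have hVt : Real.exp (α * t) * V t ≤ v ⬝ᵥ P.mulVec v := ht'
  have hexp : Real.exp (-(α) * t) = (Real.exp (α * t))⁻¹ := by
    rw [neg_mul, Real.exp_neg]
  calc V t = (Real.exp (α * t))⁻¹ * (Real.exp (α * t) * V t) := by
        field_simp
    _ ≤ (Real.exp (α * t))⁻¹ * (v ⬝ᵥ P.mulVec v) := by
        exact mul_le_mul_of_nonneg_left hVt (inv_nonneg.mpr (Real.exp_pos _).le)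
    _ = Real.exp (-(α) * t) * (v ⬝ᵥ P.mulVec v) := by rw [hexp]
end

section
/- Let T : ℝ^{n_x} → ℝ^{n_z} be C¹ with ‖(∂T/∂x)(x)‖ ≤ L_T for all x in a convex set X, and let φ : ℝ^{n_z} × ℝ^{n_y} → ℝ^{n_z} be Lipschitz in its second argument with constant L_{φ,y}. Suppose T satisfies the intertwining PDE (∂T/∂x)(x)·f(x) = φ(T(x), h(x)) on X. If x(t) solves ẋ = f(x) + w(t) with x(t) ∈ X for all t, and y(t) = h(x(t)) + v(t), then z*(t) = T(x(t)) satisfies ż*(t) = φ(z*(t), y(t)) + Δ(t) with |Δ(t)| ≤ L_{φ,y}|v(t)| + L_T|w(t)|. -/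
open Set

/-- The image of the perturbed true trajectory under the immersion `T` is an approximate
solution of the latent dynamics, with mismatch bounded by `L_{φ,y}|v(t)| + L_T|w(t)|`. -/
theorem stmt13 (nx nz ny : ℕ) (LT Lφy : ℝ)
    (f : EuclideanSpace ℝ (Fin nx) → EuclideanSpace ℝ (Fin nx))
    (h : EuclideanSpace ℝ (Fin nx) → EuclideanSpace ℝ (Fin ny))
    (T : EuclideanSpace ℝ (Fin nx) → EuclideanSpace ℝ (Fin nz))
    (φ : EuclideanSpace ℝ (Fin nz) → EuclideanSpace ℝ (Fin ny) → EuclideanSpace ℝ (Fin nz))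
    (X : Set (EuclideanSpace ℝ (Fin nx))) (hX : Convex ℝ X)
    (hT : ContDiff ℝ 1 T)
    (hTbound : ∀ x ∈ X, ‖fderiv ℝ T x‖ ≤ LT)
    (hφLip : ∀ z y₁ y₂, ‖φ z y₁ - φ z y₂‖ ≤ Lφy * ‖y₁ - y₂‖)
    (hPDE : ∀ x ∈ X, fderiv ℝ T x (f x) = φ (T x) (h x))
    (x : ℝ → EuclideanSpace ℝ (Fin nx))
    (w : ℝ → EuclideanSpace ℝ (Fin nx)) (v : ℝ → EuclideanSpace ℝ (Fin ny))
    (hx : ∀ t, HasDerivAt x (f (x t) + w t) t)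
    (hxX : ∀ t, x t ∈ X) :
    ∀ t, ∃ Δ : EuclideanSpace ℝ (Fin nz),
      HasDerivAt (fun s => T (x s)) (φ (T (x t)) (h (x t) + v t) + Δ) t ∧
      ‖Δ‖ ≤ Lφy * ‖v t‖ + LT * ‖w t‖ := by
  intro t
  refine ⟨φ (T (x t)) (h (x t)) - φ (T (x t)) (h (x t) + v t) + fderiv ℝ T (x t) (w t), ?_, ?_⟩
  · have hd : HasDerivAt (fun s => T (x s)) (fderiv ℝ T (x t) (f (x t) + w t)) t :=
      ((hT.differentiable one_ne_zero (x t)).hasFDerivAt).comp_hasDerivAt t (hx t)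
    convert hd using 1
    rw [map_add, hPDE (x t) (hxX t)]
    abel
  · calc ‖φ (T (x t)) (h (x t)) - φ (T (x t)) (h (x t) + v t) + fderiv ℝ T (x t) (w t)‖
        ≤ ‖φ (T (x t)) (h (x t)) - φ (T (x t)) (h (x t) + v t)‖ + ‖fderiv ℝ T (x t) (w t)‖ :=
          norm_add_le _ _
      _ ≤ Lφy * ‖v t‖ + LT * ‖w t‖ := by
          gcongr ?_ + ?_
          · have := hφLip (T (x t)) (h (x t)) (h (x t) + v t)
            simpa using this
          · calc ‖fderiv ℝ T (x t) (w t)‖ ≤ ‖fderiv ℝ T (x t)‖ * ‖w t‖ :=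
                (fderiv ℝ T (x t)).le_opNorm _
              _ ≤ LT * ‖w t‖ := by
                  have := hTbound (x t) (hxX t)
                  gcongr
end
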